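/- (Energy-norm best approximation of the ideal DPG solution.) Define the energy norm on U by ‖u‖_E := ‖Tu‖_V. Let U_h ⊆ U be a finite-dimensional subspace, let l : V → ℂ be a bounded antilinear functional, let u ∈ U satisfy b(u, v) = l(v) for all v ∈ V, and let u_h ∈ U_h satisfy b(u_h, T w_h) = l(T w_h) for all w_h ∈ U_h. Then ‖u − u_h‖_E = inf_{w_h ∈ U_h} ‖u − w_h‖_E, i.e., the ideal DPG solution is the best approximation of u from U_h in the energy norm. -/

import Mathlib

/-- (Energy-norm best approximation of the ideal DPG solution.) Define
the energy norm on `U` by `‖u‖_E := ‖Tu‖_V`, where `T` is the trial-to-test operator,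
`(Tu, v)_V = b(u, v)` for all `v ∈ V`. Let `U_h ⊆ U` be a finite-dimensional subspace,
let `u ∈ U` solve `b(u, v) = l(v)` for all `v ∈ V`, and let `u_h ∈ U_h` solve
`b(u_h, T w_h) = l(T w_h)` for all `w_h ∈ U_h`. Then
`‖u − u_h‖_E = inf_{w_h ∈ U_h} ‖u − w_h‖_E`, i.e. the ideal DPG solution is the best
approximation of `u` from `U_h` in the energy norm. -/
theorem ideal_dpg_energy_norm_best_approximation
    {U V : Type*}
    [NormedAddCommGroup U] [InnerProductSpace ℂ U] [CompleteSpace U]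
    [NormedAddCommGroup V] [InnerProductSpace ℂ V] [CompleteSpace V]
    (b : U →ₗ[ℂ] V →ₗ⋆[ℂ] ℂ)
    (M : ℝ) (hM : 0 < M)
    (hb : ∀ (u : U) (v : V), ‖b u v‖ ≤ M * ‖u‖ * ‖v‖)
    (T : U → V) (hT : ∀ (u : U) (v : V), (inner ℂ v (T u) : ℂ) = b u v)
    (Uh : Submodule ℂ U) [FiniteDimensional ℂ Uh]
    (l : V →L⋆[ℂ] ℂ)
    (u : U) (hu : ∀ v : V, b u v = l v)
    (uh : U) (huh : uh ∈ Uh)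
    (hdpg : ∀ w ∈ Uh, b uh (T w) = l (T w)) :
    ‖T (u - uh)‖ = ⨅ w : Uh, ‖T (u - (w : U))‖ := by
  -- T is additive on differences in the sense we need:
  have hTadd : ∀ x y : U, T (x + y) = T x + T y := by
    intro x y
    apply ext_inner_left ℂ
    intro v
    rw [inner_add_right, hT, hT, hT, map_add, LinearMap.add_apply]
  -- Orthogonality: for w ∈ Uh, ⟪T w, T (u - uh)⟫ = 0
  have horth : ∀ w ∈ Uh, (inner ℂ (T w) (T (u - uh)) : ℂ) = 0 := by
    intro w hw
    rw [hT]
    have : b (u - uh) (T w) = b u (T w) - b uh (T w) := by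
      rw [map_sub, LinearMap.sub_apply]
    rw [this, hu, hdpg w hw, sub_self]
  -- key inequality
  have hkey : ∀ w : Uh, ‖T (u - uh)‖ ≤ ‖T (u - (w : U))‖ := by
    intro w
    have hdecomp : T (u - (w : U)) = T (u - uh) + T (uh - (w : U)) := by
      rw [← hTadd]; congr 1; abel
    have hmem : uh - (w : U) ∈ Uh := Uh.sub_mem huh w.2
    have h0 : (inner ℂ (T (u - uh)) (T (uh - (w : U))) : ℂ) = 0 := by
      rw [← inner_conj_symm, horth _ hmem, map_zero]
    have hsq := norm_add_sq_eq_norm_sq_add_norm_sq_of_inner_eq_zero _ _ h0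
    rw [hdecomp]
    nlinarith [hsq, norm_nonneg (T (u - uh)),
      norm_nonneg (T (u - uh) + T (uh - (w : U))), norm_nonneg (T (uh - (w : U)))]
  refine le_antisymm (le_ciInf hkey) ?_
  have hbdd : BddBelow (Set.range fun w : Uh => ‖T (u - (w : U))‖) :=
    ⟨0, by rintro x ⟨w, rfl⟩; exact norm_nonneg _⟩
  exact ciInf_le hbdd ⟨uh, huh⟩
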